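/- For |q|<1, the theta function φ(q) = Σ_{n∈ℤ} q^{n²} satisfies φ(q) = (Π_{n≥1}(1-q^{2n}))^5 / ((Π_{n≥1}(1-q^n))^2 · (Π_{n≥1}(1-q^{4n}))^2). -/

import Mathlib

open Finset

namespace JTP

/-- Gaussian binomial coefficient in base `q^2`, defined by Pascal recursion. -/
noncomputable def gb (q : ℂ) : ℕ → ℕ → ℂ
  | 0, 0 => 1
  | 0, _ + 1 => 0
  | _ + 1, 0 => 1
  | m + 1, k + 1 => gb q m (k + 1) + q ^ (2 * (m - k)) * gb q m k

@[simp] lemma gb_zero_succ (q : ℂ) (k : ℕ) : gb q 0 (k + 1) = 0 := rfl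
lemma gb_succ_succ (q : ℂ) (m k : ℕ) :
    gb q (m + 1) (k + 1) = gb q m (k + 1) + q ^ (2 * (m - k)) * gb q m k := rfl

@[simp] lemma gb_self_zero (q : ℂ) (m : ℕ) : gb q m 0 = 1 := by
  cases m <;> rfl

lemma gb_eq_zero (q : ℂ) : ∀ m k : ℕ, m < k → gb q m k = 0 := by
  intro m
  induction m with
  | zero => intro k hk; cases k with
      | zero => omega
      | succ k => rfl
  | succ m ih =>
      intro k hk
      cases k with
      | zero => omega
      | succ k =>
          rw [gb_succ_succ, ih (k+1) (by omega), ih k (by omega)]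
          ring

/-- auxiliary geometric identity for the column-1 Gaussian binomial -/
lemma gb_one_aux (q : ℂ) : ∀ m : ℕ, gb q m 1 + q ^ (2 * m) = q ^ 2 * gb q m 1 + 1 := by
  intro m
  induction m with
  | zero => simp
  | succ m ih =>
      rw [show gb q (m+1) 1 = gb q m 1 + q ^ (2 * m) * gb q m 0 from gb_succ_succ q m 0]
      rw [show (2:ℕ) * (m+1) = 2*m + 2 from by ring, pow_add]
      simp only [gb_self_zero, mul_one]
      linear_combination ih

/-- the second Pascal identity -/
lemma gb_pascal2 (q : ℂ) : ∀ m k : ℕ,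
    gb q (m + 1) (k + 1) = q ^ (2 * (k + 1)) * gb q m (k + 1) + gb q m k := by
  intro m
  induction m with
  | zero =>
      intro k
      cases k with
      | zero => simp [gb_succ_succ]
      | succ k => simp [gb_succ_succ, gb_eq_zero q 1 (k+2) (by omega)]
  | succ m ih =>
      intro k
      cases k with
      | zero =>
          rw [show gb q (m+2) 1 = gb q (m+1) 1 + q ^ (2 * ((m+1) - 0)) * gb q (m+1) 0
            from gb_succ_succ q (m+1) 0]
          simp only [gb_self_zero, Nat.sub_zero, mul_one]
          have h := gb_one_aux q (m+1)
          have h2 : q ^ (2 * (0+1)) = q ^ 2 := by norm_num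
          rw [h2]
          linear_combination h
      | succ k =>
          by_cases hkm : k + 1 ≤ m
          · conv_rhs => rw [gb_succ_succ q m (k+1), gb_succ_succ q m k]
            rw [gb_succ_succ q (m+1) (k+1), ih (k+1), ih k]
            rw [show (m + 1 : ℕ) - (k + 1) = (m - (k+1)) + 1 from by omega]
            rw [show (m : ℕ) - k = (m - (k+1)) + 1 from by omega]
            rw [show (2 : ℕ) * (m - (k+1) + 1) = 2 * (m - (k+1)) + 2 from by ring]
            rw [show (2 : ℕ) * (k + 1 + 1) = 2 * (k + 1) + 2 from by ring]
            rw [pow_add, pow_add]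
            ring
          · rw [gb_succ_succ q (m+1) (k+1), gb_eq_zero q (m+1) (k+2) (by omega)]
            by_cases hk : k = m
            · rw [show (m + 1 : ℕ) - (k + 1) = 0 from by omega]
              simp
            · rw [gb_eq_zero q (m+1) (k+1) (by omega)]
              ring


/-- partial products `∏_{i<k} (1 - q^{2(i+1)})` -/
noncomputable def Dp (q : ℂ) (k : ℕ) : ℂ := ∏ i ∈ Finset.range k, (1 - q ^ (2 * (i + 1)))

@[simp] lemma Dp_zero (q : ℂ) : Dp q 0 = 1 := by simp [Dp]

lemma Dp_succ (q : ℂ) (k : ℕ) : Dp q (k + 1) = Dp q k * (1 - q ^ (2 * (k + 1))) := by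
  simp [Dp, Finset.prod_range_succ]

/-- closed form (division-free): `gb m k * D(m-k) * D k = D m`. -/
lemma gb_mul_Dp (q : ℂ) : ∀ m k : ℕ, k ≤ m →
    gb q m k * (Dp q (m - k) * Dp q k) = Dp q m := by
  intro m
  induction m with
  | zero =>
      intro k hk
      interval_cases k
      simp
  | succ m ih =>
      intro k hk
      cases k with
      | zero => simp
      | succ k =>
          by_cases hkm : k + 1 ≤ m
          · have hsub : (m + 1 : ℕ) - (k + 1) = m - (k + 1) + 1 := by omega
            have ha : (m : ℕ) - k = m - (k + 1) + 1 := by omega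
            have e1 : gb q m (k+1) * (Dp q (m - (k+1)) * Dp q (k+1)) = Dp q m := ih (k+1) hkm
            have e2 : gb q m k * ((Dp q (m - (k+1)) * (1 - q ^ (2 * (m - (k+1)) + 2))) * Dp q k)
                = Dp q m := by
              have := ih k (by omega)
              rwa [ha, Dp_succ, show (2:ℕ) * (m - (k+1) + 1) = 2 * (m - (k+1)) + 2 from by ring]
                at this
            have h3 : Dp q (k+1) = Dp q k * (1 - q ^ (2 * (k + 1))) := Dp_succ q k
            have hpow : q ^ (2 * (m + 1)) = q ^ (2 * (m - (k+1)) + 2) * q ^ (2 * (k + 1)) := by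
              rw [← pow_add]
              congr 1
              omega
            rw [hsub, gb_succ_succ, ha, Dp_succ q (m - (k+1)), Dp_succ q m,
              show (2:ℕ) * (m - (k+1) + 1) = 2 * (m - (k+1)) + 2 from by ring]
            linear_combination (1 - q ^ (2 * (m - (k+1)) + 2)) * e1
              + q ^ (2 * (m - (k+1)) + 2) * (1 - q ^ (2 * (k + 1))) * e2
              + q ^ (2 * (m - (k+1)) + 2) * gb q m k
                  * (Dp q (m - (k+1)) * (1 - q ^ (2 * (m - (k+1)) + 2))) * h3
              + Dp q m * hpow
          · have hk' : k = m := by omega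
            subst hk'
            have e : gb q k k * (Dp q (k - k) * Dp q k) = Dp q k := ih k le_rfl
            rw [Nat.sub_self] at e ⊢
            simp only [Dp_zero, one_mul] at e ⊢
            rw [gb_succ_succ, gb_eq_zero q k (k+1) (by omega), Nat.sub_self, pow_zero,
              Dp_succ q k]
            linear_combination (1 - q ^ (2 * (k + 1))) * e



/-- squared distance exponent -/
def eN (k N : ℕ) : ℕ := ((k : ℤ) - N).natAbs ^ 2

lemma eN_int (k N : ℕ) : (eN k N : ℤ) = ((k : ℤ) - N) ^ 2 := by
  unfold eN
  push_cast
  rw [sq_abs]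

lemma eN_shift (i N : ℕ) : eN (i + 1) (N + 1) = eN i N := by
  have h1 := eN_int (i+1) (N+1)
  have h2 := eN_int i N
  have : (eN (i+1) (N+1) : ℤ) = (eN i N : ℤ) := by rw [h1, h2]; push_cast; ring
  exact_mod_cast this

lemma exp_idA (k N : ℕ) : 2 * k + eN k (N + 1) = (2 * N + 1) + eN k N := by
  have h1 := eN_int k (N+1)
  have h2 := eN_int k N
  have : ((2 * k + eN k (N + 1) : ℕ) : ℤ) = (((2 * N + 1) + eN k N : ℕ) : ℤ) := by
    push_cast [h1, h2]
    ring
  exact_mod_cast this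

lemma exp_idC (j N : ℕ) (hj : j ≤ 2 * N) :
    2 * (2 * N + 1 - (j + 1)) + eN (j + 2) (N + 1) = (2 * N + 1) + eN j N := by
  zify [show j + 1 ≤ 2 * N + 1 from by omega]
  rw [eN_int, eN_int]
  push_cast
  ring

/-- the theta partial sum -/
noncomputable def SS (q : ℂ) (N : ℕ) : ℂ :=
  ∑ k ∈ Finset.range (2 * N + 1), gb q (2 * N) k * q ^ (eN k N)

lemma SS_zero (q : ℂ) : SS q 0 = 1 := by
  simp [SS, eN]

lemma SS_succ (q : ℂ) (N : ℕ) : SS q (N + 1) = (1 + q ^ (2 * N + 1)) ^ 2 * SS q N := by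
  have hA : (∑ i ∈ Finset.range (2*N+2),
        q ^ (2*(i+1)) * gb q (2*N) (i+1) * q ^ (eN (i+1) (N+1))) + q ^ (eN 0 (N+1))
      = q ^ (2*N+1) * SS q N := by
    have hpeel : (∑ k ∈ Finset.range (2*N+3), q ^ (2*k) * gb q (2*N) k * q ^ (eN k (N+1)))
        = (∑ i ∈ Finset.range (2*N+2),
            q ^ (2*(i+1)) * gb q (2*N) (i+1) * q ^ (eN (i+1) (N+1)))
          + q ^ (2*0) * gb q (2*N) 0 * q ^ (eN 0 (N+1)) :=
      Finset.sum_range_succ' _ _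
    rw [show (2*0 : ℕ) = 0 from rfl, pow_zero, one_mul, gb_self_zero, one_mul] at hpeel
    rw [← hpeel]
    rw [Finset.sum_range_succ, Finset.sum_range_succ,
      gb_eq_zero q (2*N) (2*N+2) (by omega), gb_eq_zero q (2*N) (2*N+1) (by omega)]
    rw [SS, Finset.mul_sum]
    simp only [mul_zero, zero_mul, mul_one, add_zero]
    apply Finset.sum_congr rfl
    intro k _
    have hpw : q ^ (2*k) * q ^ (eN k (N+1)) = q ^ (2*N+1) * q ^ (eN k N) := by
      rw [← pow_add, ← pow_add, exp_idA k N]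
    linear_combination gb q (2*N) k * hpw
  have hB : (∑ i ∈ Finset.range (2*N+2), gb q (2*N) i * q ^ (eN (i+1) (N+1))) = SS q N := by
    rw [Finset.sum_range_succ, gb_eq_zero q (2*N) (2*N+1) (by omega), zero_mul, add_zero, SS]
    exact Finset.sum_congr rfl fun i _ => by rw [eN_shift]
  have hC : (∑ i ∈ Finset.range (2*N+2),
        q ^ (2*(2*N+1-i)) * gb q (2*N+1) i * q ^ (eN (i+1) (N+1)))
      = q ^ (2*(2*N+1)) * SS q N + q ^ (2*N+1) * SS q N := by
    have hpeel : (∑ i ∈ Finset.range (2*N+2),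
          q ^ (2*(2*N+1-i)) * gb q (2*N+1) i * q ^ (eN (i+1) (N+1)))
        = (∑ j ∈ Finset.range (2*N+1),
            q ^ (2*(2*N+1-(j+1))) * gb q (2*N+1) (j+1) * q ^ (eN (j+2) (N+1)))
          + q ^ (2*(2*N+1-0)) * gb q (2*N+1) 0 * q ^ (eN 1 (N+1)) :=
      Finset.sum_range_succ' _ _
    rw [hpeel]
    have hsplit : ∀ j ∈ Finset.range (2*N+1),
        q ^ (2*(2*N+1-(j+1))) * gb q (2*N+1) (j+1) * q ^ (eN (j+2) (N+1))
        = q ^ (2*(2*N+1)) * (gb q (2*N) (j+1) * q ^ (eN (j+1) N))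
          + q ^ (2*N+1) * (gb q (2*N) j * q ^ (eN j N)) := by
      intro j hj
      rw [Finset.mem_range] at hj
      rw [gb_pascal2 q (2*N) j]
      have h1 : q ^ (2*(2*N+1-(j+1))) * q ^ (2*(j+1)) = q ^ (2*(2*N+1)) := by
        rw [← pow_add]
        congr 1
        omega
      have h2 : q ^ (2*(2*N+1-(j+1))) * q ^ (eN (j+2) (N+1)) = q ^ (2*N+1) * q ^ (eN j N) := by
        rw [← pow_add, ← pow_add, exp_idC j N (by omega)]
      have h3 : eN (j+2) (N+1) = eN (j+1) N := eN_shift (j+1) N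
      calc q ^ (2*(2*N+1-(j+1))) * (q ^ (2*(j+1)) * gb q (2*N) (j+1) + gb q (2*N) j)
            * q ^ (eN (j+2) (N+1))
          = (q ^ (2*(2*N+1-(j+1))) * q ^ (2*(j+1))) * gb q (2*N) (j+1) * q ^ (eN (j+2) (N+1))
            + (q ^ (2*(2*N+1-(j+1))) * q ^ (eN (j+2) (N+1))) * gb q (2*N) j := by ring
        _ = q ^ (2*(2*N+1)) * (gb q (2*N) (j+1) * q ^ (eN (j+1) N))
            + q ^ (2*N+1) * (gb q (2*N) j * q ^ (eN j N)) := by rw [h1, h2, h3]; ring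
    rw [Finset.sum_congr rfl hsplit, Finset.sum_add_distrib, ← Finset.mul_sum, ← Finset.mul_sum]
    have hfold : (∑ j ∈ Finset.range (2*N+1), gb q (2*N) j * q ^ (eN j N)) = SS q N := rfl
    rw [hfold]
    have hS1 : (∑ j ∈ Finset.range (2*N+1), gb q (2*N) (j+1) * q ^ (eN (j+1) N))
        = SS q N - q ^ (eN 0 N) := by
      have hpeel2 : SS q N
          = (∑ j ∈ Finset.range (2*N), gb q (2*N) (j+1) * q ^ (eN (j+1) N))
            + gb q (2*N) 0 * q ^ (eN 0 N) := Finset.sum_range_succ' _ _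
      rw [Finset.sum_range_succ, gb_eq_zero q (2*N) (2*N+1) (by omega), zero_mul, add_zero]
      rw [hpeel2, gb_self_zero, one_mul]
      ring
    rw [hS1]
    have he1 : eN 1 (N+1) = eN 0 N := eN_shift 0 N
    rw [show (2*N+1-0 : ℕ) = 2*N+1 from rfl, gb_self_zero, he1]
    ring
  -- main computation
  have h2 : 2 * (N + 1) = 2*N + 2 := by ring
  rw [SS, h2]
  have hpeel0 : (∑ k ∈ Finset.range (2*N+2+1), gb q (2*N+2) k * q ^ (eN k (N+1)))
      = (∑ i ∈ Finset.range (2*N+2), gb q (2*N+2) (i+1) * q ^ (eN (i+1) (N+1)))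
        + gb q (2*N+2) 0 * q ^ (eN 0 (N+1)) := Finset.sum_range_succ' _ _
  rw [hpeel0, gb_self_zero, one_mul]
  have hexpand : ∀ i ∈ Finset.range (2*N+2),
      gb q (2*N+2) (i+1) * q ^ (eN (i+1) (N+1))
      = q ^ (2*(i+1)) * gb q (2*N) (i+1) * q ^ (eN (i+1) (N+1))
        + gb q (2*N) i * q ^ (eN (i+1) (N+1))
        + q ^ (2*(2*N+1-i)) * gb q (2*N+1) i * q ^ (eN (i+1) (N+1)) := by
    intro i _
    have : gb q (2*N+2) (i+1)
        = q ^ (2*(i+1)) * gb q (2*N) (i+1) + gb q (2*N) i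
          + q ^ (2*(2*N+1-i)) * gb q (2*N+1) i := by
      rw [show (2*N+2 : ℕ) = (2*N+1)+1 from rfl, gb_succ_succ q (2*N+1) i,
        gb_pascal2 q (2*N) i]
    rw [this]
    ring
  rw [Finset.sum_congr rfl hexpand, Finset.sum_add_distrib, Finset.sum_add_distrib]
  have := hA
  rw [show (∑ i ∈ Finset.range (2*N+2), q ^ (2*(i+1)) * gb q (2*N) (i+1) * q ^ (eN (i+1) (N+1)))
        + (∑ i ∈ Finset.range (2*N+2), gb q (2*N) i * q ^ (eN (i+1) (N+1)))
        + (∑ i ∈ Finset.range (2*N+2),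
            q ^ (2*(2*N+1-i)) * gb q (2*N+1) i * q ^ (eN (i+1) (N+1)))
        + q ^ (eN 0 (N+1))
      = ((∑ i ∈ Finset.range (2*N+2),
            q ^ (2*(i+1)) * gb q (2*N) (i+1) * q ^ (eN (i+1) (N+1))) + q ^ (eN 0 (N+1)))
        + (∑ i ∈ Finset.range (2*N+2), gb q (2*N) i * q ^ (eN (i+1) (N+1)))
        + (∑ i ∈ Finset.range (2*N+2),
            q ^ (2*(2*N+1-i)) * gb q (2*N+1) i * q ^ (eN (i+1) (N+1))) from by ring]
  rw [hA, hB, hC]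
  have hp : q ^ (2*(2*N+1)) = q ^ (2*N+1) * q ^ (2*N+1) := by
    rw [← pow_add]
    congr 1
    omega
  rw [hp]
  ring


lemma SS_eq_prod (q : ℂ) (N : ℕ) :
    SS q N = (∏ n ∈ Finset.range N, (1 + q ^ (2 * n + 1))) ^ 2 := by
  induction N with
  | zero => simp [SS_zero]
  | succ N ih => rw [SS_succ, ih, Finset.prod_range_succ, mul_pow]; ring

section Analytic

variable {q : ℂ} (hq : ‖q‖ < 1)

include hq in
lemma pow_norm_lt (n : ℕ) : ‖q ^ (n + 1)‖ < 1 := by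
  rw [norm_pow]
  calc ‖q‖ ^ (n + 1) ≤ ‖q‖ ^ 1 := pow_le_pow_of_le_one (norm_nonneg q) hq.le (by omega)
    _ < 1 := by simpa using hq

include hq in
/-- master multipliability lemma for products `∏ (1 + u n)` with `‖u n‖ ≤ ‖q‖^(n+1)`. -/
lemma mult_aux {u : ℕ → ℂ} (hu : ∀ n, ‖u n‖ ≤ ‖q‖ ^ (n + 1)) :
    Multipliable (fun n => 1 + u n) ∧ (∏' n, (1 + u n)) ≠ 0 := by
  have hr0 : (0 : ℝ) ≤ ‖q‖ := norm_nonneg q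
  have hun : ∀ n, ‖u n‖ < 1 := fun n => lt_of_le_of_lt (hu n) (by
    calc ‖q‖ ^ (n + 1) ≤ ‖q‖ ^ 1 := pow_le_pow_of_le_one hr0 hq.le (by omega)
      _ < 1 := by simpa using hq)
  have hne : ∀ n, 1 + u n ≠ 0 := by
    intro n h
    have : ‖u n‖ = 1 := by
      have : u n = -1 := by linear_combination h
      rw [this, norm_neg, norm_one]
    linarith [hun n]
  have hgeo : Summable (fun n : ℕ => ‖q‖ ^ (n + 1)) := by
    refine ((summable_geometric_of_lt_one hr0 hq).mul_left ‖q‖).congr fun n => ?_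
    rw [← pow_succ']
  have hlog : Summable (fun n => Complex.log (1 + u n)) := by
    refine Summable.of_norm_bounded
      (g := fun n => (‖q‖ * (1 - ‖q‖)⁻¹ / 2 + 1) * ‖q‖ ^ (n + 1)) (hgeo.mul_left _) fun n => ?_
    refine le_trans (Complex.norm_log_one_add_le (hun n)) ?_
    have h1 : ‖u n‖ ^ 2 * (1 - ‖u n‖)⁻¹ / 2 ≤ ‖q‖ ^ (n + 1) * (‖q‖ * (1 - ‖q‖)⁻¹) / 2 := by
      have hinv : (1 - ‖u n‖)⁻¹ ≤ (1 - ‖q‖)⁻¹ := by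
        apply inv_anti₀ (by linarith) (by
          have := hu n
          have h2 : ‖q‖ ^ (n + 1) ≤ ‖q‖ ^ 1 := pow_le_pow_of_le_one hr0 hq.le (by omega)
          simp only [pow_one] at h2
          linarith)
      have hsq : ‖u n‖ ^ 2 ≤ ‖q‖ ^ (n + 1) * ‖q‖ := by
        rw [sq]
        apply mul_le_mul (hu n) _ (norm_nonneg _) (pow_nonneg hr0 _)
        calc ‖u n‖ ≤ ‖q‖ ^ (n + 1) := hu n
          _ ≤ ‖q‖ ^ 1 := pow_le_pow_of_le_one hr0 hq.le (by omega)
          _ = ‖q‖ := pow_one _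
      have hnum : ‖u n‖ ^ 2 * (1 - ‖u n‖)⁻¹ ≤ (‖q‖ ^ (n + 1) * ‖q‖) * (1 - ‖q‖)⁻¹ :=
        mul_le_mul hsq hinv (inv_nonneg.2 (by linarith [hun n])) (by positivity)
      calc ‖u n‖ ^ 2 * (1 - ‖u n‖)⁻¹ / 2 ≤ (‖q‖ ^ (n + 1) * ‖q‖) * (1 - ‖q‖)⁻¹ / 2 := by
            linarith
        _ = ‖q‖ ^ (n + 1) * (‖q‖ * (1 - ‖q‖)⁻¹) / 2 := by ring
    calc ‖u n‖ ^ 2 * (1 - ‖u n‖)⁻¹ / 2 + ‖u n‖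
        ≤ ‖q‖ ^ (n + 1) * (‖q‖ * (1 - ‖q‖)⁻¹) / 2 + ‖q‖ ^ (n + 1) := add_le_add h1 (hu n)
      _ = (‖q‖ * (1 - ‖q‖)⁻¹ / 2 + 1) * ‖q‖ ^ (n + 1) := by ring
  constructor
  · exact Complex.multipliable_of_summable_log hlog
  · have := Complex.cexp_tsum_eq_tprod (f := fun n => 1 + u n) hne hlog
    rw [← this]
    exact Complex.exp_ne_zero _

include hq in
lemma mult_one_sub (m : ℕ) (hm : 1 ≤ m) :
    Multipliable (fun n : ℕ => 1 - q ^ (m * (n + 1))) ∧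
      (∏' n : ℕ, (1 - q ^ (m * (n + 1)))) ≠ 0 := by
  have h : (fun n : ℕ => 1 - q ^ (m * (n + 1))) = fun n => 1 + -(q ^ (m * (n + 1))) := by
    funext n
    ring
  rw [h]
  apply mult_aux hq
  intro n
  rw [norm_neg, norm_pow]
  exact pow_le_pow_of_le_one (norm_nonneg q) hq.le (by nlinarith)


include hq in
lemma one_sub_pow_ne (n : ℕ) (hn : 1 ≤ n) : 1 - q ^ n ≠ 0 := by
  intro h
  have h1 : q ^ n = 1 := by linear_combination -h
  have h2 : ‖q ^ n‖ < 1 := by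
    obtain ⟨m, rfl⟩ : ∃ m, n = m + 1 := ⟨n - 1, by omega⟩
    exact pow_norm_lt hq m
  rw [h1, norm_one] at h2
  exact lt_irrefl _ h2

include hq in
lemma Dp_ne_zero (k : ℕ) : Dp q k ≠ 0 := by
  rw [Dp]
  exact Finset.prod_ne_zero_iff.2 fun i _ => one_sub_pow_ne hq _ (by omega)

include hq in
lemma Dp_norm_le (k : ℕ) : ‖Dp q k‖ ≤ Real.exp ((1 - ‖q‖)⁻¹) := by
  have hr0 : (0 : ℝ) ≤ ‖q‖ := norm_nonneg q
  rw [Dp, norm_prod]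
  calc ∏ i ∈ Finset.range k, ‖1 - q ^ (2 * (i + 1))‖
      ≤ ∏ i ∈ Finset.range k, Real.exp (‖q‖ ^ i) := by
        apply Finset.prod_le_prod (fun i _ => norm_nonneg _) fun i _ => ?_
        calc ‖1 - q ^ (2 * (i + 1))‖ ≤ ‖(1 : ℂ)‖ + ‖q ^ (2 * (i + 1))‖ := norm_sub_le _ _
          _ = 1 + ‖q‖ ^ (2 * (i + 1)) := by rw [norm_one, norm_pow]
          _ ≤ 1 + ‖q‖ ^ i := by
              have := pow_le_pow_of_le_one hr0 hq.le (show i ≤ 2 * (i + 1) by omega)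
              linarith
          _ ≤ Real.exp (‖q‖ ^ i) := by
              have := Real.add_one_le_exp (‖q‖ ^ i)
              linarith
    _ = Real.exp (∑ i ∈ Finset.range k, ‖q‖ ^ i) := (Real.exp_sum _ _).symm
    _ ≤ Real.exp ((1 - ‖q‖)⁻¹) := by
        apply Real.exp_le_exp.2
        calc ∑ i ∈ Finset.range k, ‖q‖ ^ i ≤ ∑' i : ℕ, ‖q‖ ^ i :=
              Summable.sum_le_tsum _ (fun i _ => pow_nonneg hr0 i)
                (summable_geometric_of_lt_one hr0 hq)
          _ = (1 - ‖q‖)⁻¹ := tsum_geometric_of_lt_one hr0 hq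

include hq in
lemma Dp_norm_ge (k : ℕ) :
    Real.exp (-((1 - ‖q‖)⁻¹ * (1 - ‖q‖ ^ 2)⁻¹)) ≤ ‖Dp q k‖ := by
  have hr0 : (0 : ℝ) ≤ ‖q‖ := norm_nonneg q
  have hr2 : ‖q‖ ^ 2 < 1 := by nlinarith
  have hper : ∀ i : ℕ, Real.exp (-(‖q‖ ^ i * (1 - ‖q‖ ^ 2)⁻¹)) ≤ 1 - ‖q‖ ^ (2 * (i + 1)) := by
    intro i
    set x : ℝ := ‖q‖ ^ (2 * (i + 1)) with hxdef
    have hx0 : 0 ≤ x := pow_nonneg hr0 _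
    have hx2 : x ≤ ‖q‖ ^ 2 := pow_le_pow_of_le_one hr0 hq.le (by omega)
    have hxi : x ≤ ‖q‖ ^ i := pow_le_pow_of_le_one hr0 hq.le (by omega)
    have hx1 : x < 1 := lt_of_le_of_lt hx2 hr2
    -- exp (-(x/(1-x))) ≤ 1 - x
    have hA : Real.exp (-(x / (1 - x))) ≤ 1 - x := by
      have ht := Real.add_one_le_exp (x / (1 - x))
      have h1x : (0 : ℝ) < 1 - x := by linarith
      have hsum : x / (1 - x) + 1 = (1 - x)⁻¹ := by field_simp; ring
      rw [Real.exp_neg]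
      have hpos : (0 : ℝ) < x / (1 - x) + 1 := by positivity
      calc (Real.exp (x / (1 - x)))⁻¹ ≤ (x / (1 - x) + 1)⁻¹ := by
            apply inv_anti₀ hpos ht
        _ = 1 - x := by rw [hsum, inv_inv]
    refine le_trans (Real.exp_le_exp.2 ?_) hA
    rw [neg_le_neg_iff]
    calc x / (1 - x) ≤ x / (1 - ‖q‖ ^ 2) := by
          apply div_le_div_of_nonneg_left hx0 (by linarith) (by linarith)
      _ ≤ ‖q‖ ^ i / (1 - ‖q‖ ^ 2) := by
          apply div_le_div_of_nonneg_right hxi (by linarith) |>.trans_eq rfl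
      _ = ‖q‖ ^ i * (1 - ‖q‖ ^ 2)⁻¹ := by rw [div_eq_mul_inv]
  calc Real.exp (-((1 - ‖q‖)⁻¹ * (1 - ‖q‖ ^ 2)⁻¹))
      ≤ Real.exp (-(∑ i ∈ Finset.range k, ‖q‖ ^ i * (1 - ‖q‖ ^ 2)⁻¹)) := by
        apply Real.exp_le_exp.2
        rw [neg_le_neg_iff, ← Finset.sum_mul]
        apply mul_le_mul_of_nonneg_right ?_ (by
          have : (0:ℝ) < 1 - ‖q‖ ^ 2 := by linarith
          positivity)
        calc ∑ i ∈ Finset.range k, ‖q‖ ^ i ≤ ∑' i : ℕ, ‖q‖ ^ i :=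
              Summable.sum_le_tsum _ (fun i _ => pow_nonneg hr0 i)
                (summable_geometric_of_lt_one hr0 hq)
          _ = (1 - ‖q‖)⁻¹ := tsum_geometric_of_lt_one hr0 hq
    _ = ∏ i ∈ Finset.range k, Real.exp (-(‖q‖ ^ i * (1 - ‖q‖ ^ 2)⁻¹)) := by
        rw [← Real.exp_sum, ← Finset.sum_neg_distrib]
    _ ≤ ∏ i ∈ Finset.range k, (1 - ‖q‖ ^ (2 * (i + 1))) := by
        apply Finset.prod_le_prod (fun i _ => (Real.exp_pos _).le) fun i _ => hper i
    _ ≤ ∏ i ∈ Finset.range k, ‖1 - q ^ (2 * (i + 1))‖ := by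
        apply Finset.prod_le_prod
        · intro i _
          have := pow_le_pow_of_le_one hr0 hq.le (show 2 ≤ 2 * (i + 1) by omega)
          nlinarith
        · intro i _
          calc 1 - ‖q‖ ^ (2 * (i + 1)) = ‖(1:ℂ)‖ - ‖q ^ (2 * (i + 1))‖ := by
                rw [norm_one, norm_pow]
            _ ≤ ‖1 - q ^ (2 * (i + 1))‖ := norm_sub_norm_le _ _
    _ = ‖Dp q k‖ := by rw [Dp, norm_prod]

include hq in
lemma gb_norm_le {m k : ℕ} (hk : k ≤ m) :
    ‖gb q m k‖ ≤ Real.exp ((1 - ‖q‖)⁻¹) /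
      Real.exp (-((1 - ‖q‖)⁻¹ * (1 - ‖q‖ ^ 2)⁻¹)) ^ 2 := by
  set c := Real.exp (-((1 - ‖q‖)⁻¹ * (1 - ‖q‖ ^ 2)⁻¹)) with hc
  have hcpos : 0 < c := Real.exp_pos _
  have key := gb_mul_Dp q m k hk
  have hnorm : ‖gb q m k‖ * (‖Dp q (m - k)‖ * ‖Dp q k‖) = ‖Dp q m‖ := by
    rw [← norm_mul, ← norm_mul, key]
  rw [le_div_iff₀ (by positivity)]
  calc ‖gb q m k‖ * c ^ 2 ≤ ‖gb q m k‖ * (‖Dp q (m - k)‖ * ‖Dp q k‖) := by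
        apply mul_le_mul_of_nonneg_left ?_ (norm_nonneg _)
        rw [sq]
        exact mul_le_mul (Dp_norm_ge hq _) (Dp_norm_ge hq _) hcpos.le (norm_nonneg _)
    _ = ‖Dp q m‖ := hnorm
    _ ≤ Real.exp ((1 - ‖q‖)⁻¹) := Dp_norm_le hq m

include hq in
lemma Dp_tendsto :
    Filter.Tendsto (fun k => Dp q k) Filter.atTop
      (nhds (∏' n : ℕ, (1 - q ^ (2 * (n + 1))))) := by
  have hm := (mult_one_sub hq 2 (by norm_num)).1
  exact hm.hasProd.tendsto_prod_nat

include hq in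
lemma gb_tendsto (j : ℤ) :
    Filter.Tendsto (fun N : ℕ => gb q (2 * N) ((N : ℤ) + j).toNat) Filter.atTop
      (nhds (∏' n : ℕ, (1 - q ^ (2 * (n + 1))))⁻¹) := by
  set P2 := ∏' n : ℕ, (1 - q ^ (2 * (n + 1))) with hP2
  have hP2ne : P2 ≠ 0 := (mult_one_sub hq 2 (by norm_num)).2
  have key : ∀ N : ℕ, j.natAbs ≤ N →
      gb q (2 * N) ((N : ℤ) + j).toNat
        = Dp q (2 * N) / (Dp q ((N : ℤ) - j).toNat * Dp q ((N : ℤ) + j).toNat) := by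
    intro N hN
    have hk : ((N : ℤ) + j).toNat ≤ 2 * N := by omega
    have hmul := gb_mul_Dp q (2 * N) (((N : ℤ) + j).toNat) hk
    have hsub : 2 * N - ((N : ℤ) + j).toNat = ((N : ℤ) - j).toNat := by omega
    rw [hsub] at hmul
    rw [eq_div_iff (mul_ne_zero (Dp_ne_zero hq _) (Dp_ne_zero hq _))]
    linear_combination hmul
  have h2N : Filter.Tendsto (fun N : ℕ => 2 * N) Filter.atTop Filter.atTop :=
    Filter.tendsto_atTop_mono (fun n => by simpa using (show n ≤ 2 * n by omega)) Filter.tendsto_id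
  have hplus : Filter.Tendsto (fun N : ℕ => ((N : ℤ) + j).toNat) Filter.atTop Filter.atTop :=
    Filter.tendsto_atTop_mono (fun n => show n - j.natAbs ≤ ((n : ℤ) + j).toNat by omega)
      (Filter.tendsto_sub_atTop_nat j.natAbs)
  have hminus : Filter.Tendsto (fun N : ℕ => ((N : ℤ) - j).toNat) Filter.atTop Filter.atTop :=
    Filter.tendsto_atTop_mono (fun n => show n - j.natAbs ≤ ((n : ℤ) - j).toNat by omega)
      (Filter.tendsto_sub_atTop_nat j.natAbs)
  have ht : Filter.Tendsto
      (fun N : ℕ => Dp q (2 * N) / (Dp q ((N : ℤ) - j).toNat * Dp q ((N : ℤ) + j).toNat))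
      Filter.atTop (nhds (P2 / (P2 * P2))) :=
    Filter.Tendsto.div ((Dp_tendsto hq).comp h2N)
      (((Dp_tendsto hq).comp hminus).mul ((Dp_tendsto hq).comp hplus))
      (mul_ne_zero hP2ne hP2ne)
  have heq : P2 / (P2 * P2) = P2⁻¹ := by field_simp
  rw [heq] at ht
  apply ht.congr'
  filter_upwards [Filter.eventually_atTop.2 ⟨j.natAbs, fun N hN => key N hN⟩] with N h
  rw [h]



include hq in
lemma summable_bound :
    Summable (fun j : ℤ => (Real.exp ((1 - ‖q‖)⁻¹) /
      Real.exp (-((1 - ‖q‖)⁻¹ * (1 - ‖q‖ ^ 2)⁻¹)) ^ 2) * ‖q‖ ^ j.natAbs) := by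
  apply Summable.mul_left
  apply Summable.of_nat_of_neg
  · exact (summable_geometric_of_lt_one (norm_nonneg q) hq).congr fun n => by simp
  · exact (summable_geometric_of_lt_one (norm_nonneg q) hq).congr fun n => by simp

omit hq in
lemma tsum_f_eq_SS (N : ℕ) :
    (∑' j : ℤ, (if j.natAbs ≤ N then gb q (2 * N) ((N : ℤ) + j).toNat * q ^ (j.natAbs ^ 2)
      else 0)) = SS q N := by
  rw [tsum_eq_sum (s := Finset.Icc (-(N : ℤ)) N)
    (fun j hj => by
      rw [if_neg]
      simp only [Finset.mem_Icc] at hj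
      omega)]
  rw [SS]
  apply Finset.sum_nbij' (i := fun j => ((j : ℤ) + N).toNat) (j := fun k => (k : ℤ) - N)
  · intro j hj
    simp only [Finset.mem_Icc] at hj
    simp only [Finset.mem_range]
    omega
  · intro k hk
    simp only [Finset.mem_range] at hk
    simp only [Finset.mem_Icc]
    omega
  · intro j hj
    simp only [Finset.mem_Icc] at hj
    omega
  · intro k hk
    simp only [Finset.mem_range] at hk
    omega
  · intro j hj
    simp only [Finset.mem_Icc] at hj
    rw [if_pos (by omega)]
    have h1 : ((N : ℤ) + j).toNat = (j + (N : ℤ)).toNat := by omega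
    have h2 : eN ((j + (N : ℤ)).toNat) N = j.natAbs ^ 2 := by
      unfold eN
      congr 2
      omega
    rw [h1, h2]

include hq in
lemma SS_tendsto :
    Filter.Tendsto (fun N => SS q N) Filter.atTop
      (nhds ((∏' n : ℕ, (1 - q ^ (2 * (n + 1))))⁻¹ * ∑' j : ℤ, q ^ (j.natAbs ^ 2))) := by
  set P2 := ∏' n : ℕ, (1 - q ^ (2 * (n + 1))) with hP2
  have key := tendsto_tsum_of_dominated_convergence
    (f := fun (N : ℕ) (j : ℤ) =>
      if j.natAbs ≤ N then gb q (2 * N) ((N : ℤ) + j).toNat * q ^ (j.natAbs ^ 2) else 0)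
    (g := fun j : ℤ => P2⁻¹ * q ^ (j.natAbs ^ 2))
    (bound := fun j : ℤ => (Real.exp ((1 - ‖q‖)⁻¹) /
      Real.exp (-((1 - ‖q‖)⁻¹ * (1 - ‖q‖ ^ 2)⁻¹)) ^ 2) * ‖q‖ ^ j.natAbs)
    (summable_bound hq)
    (fun j => by
      apply Filter.Tendsto.congr'
        (f₁ := fun N : ℕ => gb q (2 * N) ((N : ℤ) + j).toNat * q ^ (j.natAbs ^ 2))
      · filter_upwards [Filter.eventually_atTop.2 ⟨j.natAbs, fun N hN => hN⟩] with N hN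
        rw [if_pos hN]
      · exact (gb_tendsto hq j).mul tendsto_const_nhds)
    (by
      apply Filter.Eventually.of_forall
      intro N j
      by_cases h : j.natAbs ≤ N
      · rw [if_pos h, norm_mul, norm_pow]
        apply mul_le_mul (gb_norm_le hq (by omega)) ?_ (by positivity) (by positivity)
        exact pow_le_pow_of_le_one (norm_nonneg q) hq.le (by nlinarith [sq_nonneg (j.natAbs - 1)])
      · rw [if_neg h, norm_zero]
        positivity)
  rw [tsum_mul_left] at key
  apply key.congr
  intro N
  exact tsum_f_eq_SS N

include hq in
theorem key_identity :
    (∑' j : ℤ, q ^ (j.natAbs ^ 2))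
      = (∏' n : ℕ, (1 - q ^ (2 * (n + 1)))) * (∏' n : ℕ, (1 + q ^ (2 * n + 1))) ^ 2 := by
  set P2 := ∏' n : ℕ, (1 - q ^ (2 * (n + 1))) with hP2def
  have hP2ne : P2 ≠ 0 := (mult_one_sub hq 2 (by norm_num)).2
  have hO : Multipliable (fun n : ℕ => 1 + q ^ (2 * n + 1)) := by
    apply (mult_aux hq (u := fun n => q ^ (2 * n + 1)) ?_).1
    intro n
    rw [norm_pow]
    exact pow_le_pow_of_le_one (norm_nonneg q) hq.le (by omega)
  have h2 : Filter.Tendsto (fun N => SS q N) Filter.atTop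
      (nhds ((∏' n : ℕ, (1 + q ^ (2 * n + 1))) ^ 2)) := by
    have := (hO.hasProd.tendsto_prod_nat).pow 2
    apply this.congr
    intro N
    rw [SS_eq_prod]
  have h1 := SS_tendsto hq
  have huniq := tendsto_nhds_unique h1 h2
  have : (∑' j : ℤ, q ^ (j.natAbs ^ 2))
      = P2 * (P2⁻¹ * ∑' j : ℤ, q ^ (j.natAbs ^ 2)) := by
    field_simp
  rw [this, huniq, hP2def]

end Analytic

end JTP

open JTP in
/-- Jacobi's triple product identity in eta-quotient form:
`φ(q) = Π(1-q^{2n})^5 / (Π(1-q^n)^2 · Π(1-q^{4n})^2)` for `|q| < 1`. -/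
theorem phi_eq_eta_quotient (q : ℂ) (hq : ‖q‖ < 1) :
    (∑' n : ℤ, q ^ (n.natAbs ^ 2)) =
      (∏' n : ℕ, (1 - q ^ (2 * (n + 1)))) ^ 5 /
        ((∏' n : ℕ, (1 - q ^ (n + 1))) ^ 2 *
          (∏' n : ℕ, (1 - q ^ (4 * (n + 1)))) ^ 2) := by
  have hr0 : (0 : ℝ) ≤ ‖q‖ := norm_nonneg q
  have hpow : ∀ a b : ℕ, a ≤ b → ‖q‖ ^ b ≤ ‖q‖ ^ a := fun a b h =>
    pow_le_pow_of_le_one hr0 hq.le h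
  -- the six products
  have hP1 : Multipliable (fun n : ℕ => 1 - q ^ (n + 1)) ∧
      (∏' n : ℕ, (1 - q ^ (n + 1))) ≠ 0 := by
    have h := mult_aux hq (u := fun n => -(q ^ (n + 1)))
      (fun n => by rw [norm_neg, norm_pow])
    have hfun : (fun n : ℕ => 1 + -(q ^ (n + 1))) = fun n => 1 - q ^ (n + 1) :=
      funext fun n => by ring
    rwa [hfun] at h
  have hP2 : Multipliable (fun n : ℕ => 1 - q ^ (2 * (n + 1))) ∧
      (∏' n : ℕ, (1 - q ^ (2 * (n + 1)))) ≠ 0 := mult_one_sub hq 2 (by norm_num)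
  have hP4 : Multipliable (fun n : ℕ => 1 - q ^ (4 * (n + 1))) ∧
      (∏' n : ℕ, (1 - q ^ (4 * (n + 1)))) ≠ 0 := mult_one_sub hq 4 (by norm_num)
  have hAp : Multipliable (fun n : ℕ => 1 + q ^ (n + 1)) ∧
      (∏' n : ℕ, (1 + q ^ (n + 1))) ≠ 0 :=
    mult_aux hq (u := fun n => q ^ (n + 1)) (fun n => by rw [norm_pow])
  have hEp : Multipliable (fun n : ℕ => 1 + q ^ (2 * (n + 1))) ∧
      (∏' n : ℕ, (1 + q ^ (2 * (n + 1)))) ≠ 0 :=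
    mult_aux hq (u := fun n => q ^ (2 * (n + 1)))
      (fun n => by rw [norm_pow]; exact hpow _ _ (by omega))
  have hOp : Multipliable (fun n : ℕ => 1 + q ^ (2 * n + 1)) ∧
      (∏' n : ℕ, (1 + q ^ (2 * n + 1))) ≠ 0 :=
    mult_aux hq (u := fun n => q ^ (2 * n + 1))
      (fun n => by rw [norm_pow]; exact hpow _ _ (by omega))
  set P1 := ∏' n : ℕ, (1 - q ^ (n + 1))
  set P2 := ∏' n : ℕ, (1 - q ^ (2 * (n + 1)))
  set P4 := ∏' n : ℕ, (1 - q ^ (4 * (n + 1)))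
  set Ap := ∏' n : ℕ, (1 + q ^ (n + 1))
  set Ep := ∏' n : ℕ, (1 + q ^ (2 * (n + 1)))
  set Op := ∏' n : ℕ, (1 + q ^ (2 * n + 1))
  -- product identities
  have e1 : P1 * Ap = P2 := by
    rw [← Multipliable.tprod_mul hP1.1 hAp.1]
    exact tprod_congr fun n => by
      rw [show 2 * (n + 1) = (n + 1) * 2 from by ring, pow_mul]
      ring
  have e2 : P2 * Ep = P4 := by
    rw [← Multipliable.tprod_mul hP2.1 hEp.1]
    exact tprod_congr fun n => by
      rw [show 4 * (n + 1) = (2 * (n + 1)) * 2 from by ring, pow_mul]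
      ring
  have e3 : Op * Ep = Ap := by
    have he : Multipliable fun k : ℕ => 1 + q ^ (2 * k + 1) := hOp.1
    have ho : Multipliable fun k : ℕ => 1 + q ^ (2 * k + 1 + 1) :=
      hEp.1.congr fun k => by rw [show 2 * (k + 1) = 2 * k + 1 + 1 from by ring]
    have h := tprod_even_mul_odd (f := fun n : ℕ => 1 + q ^ (n + 1)) he ho
    have hEp' : (∏' k : ℕ, (1 + q ^ (2 * k + 1 + 1))) = Ep :=
      tprod_congr fun k => by rw [show 2 * k + 1 + 1 = 2 * (k + 1) from by ring]
    rwa [hEp'] at h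
  have hkey := key_identity hq
  rw [hkey]
  have h5 : Op * (P1 * P4) = P2 * P2 := by
    linear_combination (-(Op * P1)) * e2 + (P2 * P1) * e3 + P2 * e1
  rw [eq_div_iff (mul_ne_zero (pow_ne_zero _ hP1.2) (pow_ne_zero _ hP4.2))]
  linear_combination (P2 * (Op * (P1 * P4) + P2 * P2)) * h5
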